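/- Lemma 2.4 (derivative of the algebraic area of the dual face, vertex-star form). Let (m, p_0, p) be a spherical vertex star with edge weights c_j and vertex weight d_0, and let f_0 ∈ ℝ and f : ZMod m → ℝ. For ε ∈ ℝ and j ∈ ZMod m, let n_j(ε) ∈ ℝ³ be the unique solution of the linear system ⟨p_0, n_j(ε)⟩ = 1 + ε·f_0, ⟨p_j, n_j(ε)⟩ = 1 + ε·f_j, ⟨p_{j+1}, n_j(ε)⟩ = 1 + ε·f_{j+1} (it exists and is unique since p_0, p_j, p_{j+1} are linearly independent). Define the algebraic area A(ε) := (1/2)·∑_{j∈ZMod m} det(p_0, n_{j−1}(ε), n_j(ε)). Then A is differentiable at ε = 0 and A′(0) = 2·d_0·f_0 + ∑_{j∈ZMod m} c_j·(f_j − f_0). In particular, if ∑_j c_j·(f_j − f_0) = −2·d_0·f_0 (i.e. f is a (−2)-eigenfunction of the discrete spherical Laplacian at the central vertex), then A′(0) = 0. -/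

import Mathlib

noncomputable section

/-- Standard inner product on `ℝ³`. -/
def dot3 (x y : Fin 3 → ℝ) : ℝ := x 0 * y 0 + x 1 * y 1 + x 2 * y 2

/-- Euclidean norm on `ℝ³`. -/
def norm3 (x : Fin 3 → ℝ) : ℝ := Real.sqrt (dot3 x x)

/-- Cross product on `ℝ³`. -/
def cross3 (x y : Fin 3 → ℝ) : Fin 3 → ℝ :=
  ![x 1 * y 2 - x 2 * y 1, x 2 * y 0 - x 0 * y 2, x 0 * y 1 - x 1 * y 0]

/-- Determinant of three vectors in `ℝ³`. -/
def det3 (x y z : Fin 3 → ℝ) : ℝ := dot3 (cross3 x y) z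

/-- Spherical angle at `a` between `b` and `c` (all unit vectors). -/
def sphAngle (a b c : Fin 3 → ℝ) : ℝ :=
  Real.arccos (dot3 (b - dot3 a b • a) (c - dot3 a c • a) /
    (norm3 (b - dot3 a b • a) * norm3 (c - dot3 a c • a)))

/-- Edge weight `c_j` of the edge `(p₀, p_j)` of a spherical vertex star. -/
def sphStarWeight (m : ℕ) (p0 : Fin 3 → ℝ) (p : ZMod m → Fin 3 → ℝ) (j : ZMod m) : ℝ :=
  (Real.tan ((sphAngle p0 (p j) (p (j+1)) + sphAngle (p j) (p (j+1)) p0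
      - sphAngle (p (j+1)) p0 (p j)) / 2)
   + Real.tan ((sphAngle p0 (p (j-1)) (p j) + sphAngle (p j) p0 (p (j-1))
      - sphAngle (p (j-1)) (p j) p0) / 2))
  / (2 * Real.cos (Real.arccos (dot3 p0 (p j)) / 2) ^ 2)

/-- Vertex weight `d₀` of a spherical vertex star. -/
def sphStarVertexWeight (m : ℕ) [NeZero m] (p0 : Fin 3 → ℝ) (p : ZMod m → Fin 3 → ℝ) : ℝ :=
  ∑ j : ZMod m, sphStarWeight m p0 p j * Real.sin (Real.arccos (dot3 p0 (p j)) / 2) ^ 2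

lemma dot3_self_nonneg (v : Fin 3 → ℝ) : 0 ≤ dot3 v v := by
  simp only [dot3]
  nlinarith [mul_self_nonneg (v 0), mul_self_nonneg (v 1), mul_self_nonneg (v 2)]

lemma dot3_unit {v : Fin 3 → ℝ} (h : norm3 v = 1) : dot3 v v = 1 := by
  unfold norm3 at h; exact Real.sqrt_eq_one.mp h

lemma gram3 (a b c : Fin 3 → ℝ) (haa : dot3 a a = 1) (hbb : dot3 b b = 1) (hcc : dot3 c c = 1) :
    det3 a b c ^ 2 = 1 - dot3 a b ^2 - dot3 a c ^2 - dot3 b c ^2 + 2*dot3 a b*dot3 a c*dot3 b c := by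
  have h : det3 a b c ^ 2 =
      dot3 a a * dot3 b b * dot3 c c + 2*(dot3 a b)*(dot3 a c)*(dot3 b c)
        - dot3 a a*(dot3 b c)^2 - dot3 b b*(dot3 a c)^2 - dot3 c c*(dot3 a b)^2 := by
    simp only [det3, cross3, dot3, Matrix.cons_val_zero, Matrix.cons_val_one, Matrix.head_cons,
      Matrix.cons_val_two, Matrix.tail_cons]
    ring
  rw [haa, hbb, hcc] at h; linarith

lemma lag3 (u v : Fin 3 → ℝ) (hu : dot3 u u = 1) (hv : dot3 v v = 1) : 0 ≤ 1 - dot3 u v ^ 2 := by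
  have h : dot3 (cross3 u v) (cross3 u v) = dot3 u u * dot3 v v - dot3 u v ^ 2 := by
    simp only [cross3, dot3, Matrix.cons_val_zero, Matrix.cons_val_one, Matrix.head_cons,
      Matrix.cons_val_two, Matrix.tail_cons]
    ring
  rw [hu, hv] at h
  have := dot3_self_nonneg (cross3 u v); linarith

lemma sq_lt_one_of_det (a b c : Fin 3 → ℝ) (haa : dot3 a a = 1) (hbb : dot3 b b = 1)
    (hcc : dot3 c c = 1) (hD : det3 a b c ≠ 0) : dot3 a b ^ 2 < 1 := by
  have hT2 := gram3 a b c haa hbb hcc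
  have key : (1 - dot3 a b^2)*(1 - dot3 a c^2)
      = det3 a b c^2 + (dot3 b c - dot3 a b*dot3 a c)^2 := by linear_combination -hT2
  have h1 := lag3 a b haa hbb
  have h2 := lag3 a c haa hcc
  have h3 : 0 < det3 a b c ^ 2 := lt_of_le_of_ne (sq_nonneg _) (Ne.symm (pow_ne_zero 2 hD))
  nlinarith [sq_nonneg (dot3 b c - dot3 a b*dot3 a c)]

lemma det3_cyc (x y z : Fin 3 → ℝ) : det3 x y z = det3 z x y := by
  simp only [det3, cross3, dot3, Matrix.cons_val_zero, Matrix.cons_val_one, Matrix.head_cons,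
    Matrix.cons_val_two, Matrix.tail_cons]
  ring

lemma det3_swap (x y z : Fin 3 → ℝ) : det3 x z y = -det3 x y z := by
  simp only [det3, cross3, dot3, Matrix.cons_val_zero, Matrix.cons_val_one, Matrix.head_cons,
    Matrix.cons_val_two, Matrix.tail_cons]
  ring

lemma dot3_comm (x y : Fin 3 → ℝ) : dot3 x y = dot3 y x := by simp only [dot3]; ring

lemma arccos_facts (q d T : ℝ) (hd : 0 < d) (hT : 0 < T) (h : T^2 + q^2 = d^2) :
    Real.cos (Real.arccos (q/d)) = q/d ∧ Real.sin (Real.arccos (q/d)) = T/d ∧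
    0 < Real.arccos (q/d) ∧ Real.arccos (q/d) < Real.pi := by
  have habs : q^2 < d^2 := by nlinarith
  have h1 : -1 < q/d := by rw [lt_div_iff₀ hd]; nlinarith
  have h2 : q/d < 1 := by rw [div_lt_one hd]; nlinarith
  refine ⟨Real.cos_arccos h1.le h2.le, ?_, Real.arccos_pos.2 h2, ?_⟩
  · rw [Real.sin_arccos]
    have e : 1 - (q/d)^2 = (T/d)^2 := by
      field_simp
      linear_combination -h
    rw [e, Real.sqrt_sq (by positivity)]
  · refine lt_of_le_of_ne (Real.arccos_le_pi _) (fun he => ?_)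
    have := Real.arccos_eq_pi.1 he; linarith

example (x : ℝ) (h1 : 0 ≤ x) (h2 : x < Real.pi) : Real.cos Real.pi < Real.cos x :=
  Real.cos_lt_cos_of_nonneg_of_le_pi h1 (le_refl _) h2

lemma lt_one_of_sq_lt_one {x : ℝ} (h : x^2 < 1) : x < 1 := by nlinarith

set_option maxHeartbeats 2000000 in
lemma star_tan (a b c : Fin 3 → ℝ) (haa : dot3 a a = 1) (hbb : dot3 b b = 1)
    (hcc : dot3 c c = 1) (hD : 0 < det3 a b c) :
    Real.tan ((sphAngle a b c + sphAngle b c a - sphAngle c a b) / 2)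
      = (1 + dot3 a b - dot3 a c - dot3 b c) / det3 a b c := by
  have hT2 := gram3 a b c haa hbb hcc
  have hDne : det3 a b c ≠ 0 := ne_of_gt hD
  have hx1 : dot3 a b ^ 2 < 1 := sq_lt_one_of_det a b c haa hbb hcc hDne
  have hy1 : dot3 a c ^ 2 < 1 := by
    have := sq_lt_one_of_det a c b haa hcc hbb (by rw [det3_swap]; exact neg_ne_zero.2 hDne)
    exact this
  have hz1 : dot3 b c ^ 2 < 1 := by
    have := sq_lt_one_of_det b c a hbb hcc haa (by rw [det3_cyc]; exact hDne)
    exact this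
  set sx := Real.sqrt (1 - dot3 a b ^ 2) with hsxdef
  set sy := Real.sqrt (1 - dot3 a c ^ 2) with hsydef
  set sz := Real.sqrt (1 - dot3 b c ^ 2) with hszdef
  have hsx0 : 0 < sx := Real.sqrt_pos.2 (by linarith)
  have hsy0 : 0 < sy := Real.sqrt_pos.2 (by linarith)
  have hsz0 : 0 < sz := Real.sqrt_pos.2 (by linarith)
  have hsx2 : sx^2 = 1 - dot3 a b ^ 2 := Real.sq_sqrt (by linarith)
  have hsy2 : sy^2 = 1 - dot3 a c ^ 2 := Real.sq_sqrt (by linarith)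
  have hsz2 : sz^2 = 1 - dot3 b c ^ 2 := Real.sq_sqrt (by linarith)
  -- the three angle identifications
  have haaX := haa; have hbbX := hbb; have hccX := hcc
  simp only [dot3] at haaX hbbX hccX
  have hA : sphAngle a b c = Real.arccos ((dot3 b c - dot3 a b*dot3 a c)/(sx*sy)) := by
    have d1 : dot3 (b - dot3 a b • a) (c - dot3 a c • a) = dot3 b c - dot3 a b*dot3 a c := by
      simp only [dot3, Pi.sub_apply, Pi.smul_apply, smul_eq_mul]
      linear_combination ((a 0*b 0+a 1*b 1+a 2*b 2)*(a 0*c 0+a 1*c 1+a 2*c 2))*haaX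
    have n1 : norm3 (b - dot3 a b • a) = sx := by
      unfold norm3; rw [hsxdef]; congr 1
      simp only [dot3, Pi.sub_apply, Pi.smul_apply, smul_eq_mul]
      linear_combination hbbX + ((a 0*b 0+a 1*b 1+a 2*b 2)^2)*haaX
    have n2 : norm3 (c - dot3 a c • a) = sy := by
      unfold norm3; rw [hsydef]; congr 1
      simp only [dot3, Pi.sub_apply, Pi.smul_apply, smul_eq_mul]
      linear_combination hccX + ((a 0*c 0+a 1*c 1+a 2*c 2)^2)*haaX
    unfold sphAngle; rw [d1, n1, n2]
  have hB : sphAngle b c a = Real.arccos ((dot3 a c - dot3 b c*dot3 a b)/(sz*sx)) := by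
    have d1 : dot3 (c - dot3 b c • b) (a - dot3 b a • b) = dot3 a c - dot3 b c*dot3 a b := by
      simp only [dot3, Pi.sub_apply, Pi.smul_apply, smul_eq_mul]
      linear_combination ((b 0*c 0+b 1*c 1+b 2*c 2)*(b 0*a 0+b 1*a 1+b 2*a 2))*hbbX
    have n1 : norm3 (c - dot3 b c • b) = sz := by
      unfold norm3; rw [hszdef]; congr 1
      simp only [dot3, Pi.sub_apply, Pi.smul_apply, smul_eq_mul]
      linear_combination hccX + ((b 0*c 0+b 1*c 1+b 2*c 2)^2)*hbbX
    have n2 : norm3 (a - dot3 b a • b) = sx := by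
      unfold norm3; rw [hsxdef]; congr 1
      simp only [dot3, Pi.sub_apply, Pi.smul_apply, smul_eq_mul]
      linear_combination haaX + ((b 0*a 0+b 1*a 1+b 2*a 2)^2)*hbbX
    unfold sphAngle; rw [d1, n1, n2]
  have hC : sphAngle c a b = Real.arccos ((dot3 a b - dot3 a c*dot3 b c)/(sy*sz)) := by
    have d1 : dot3 (a - dot3 c a • c) (b - dot3 c b • c) = dot3 a b - dot3 a c*dot3 b c := by
      simp only [dot3, Pi.sub_apply, Pi.smul_apply, smul_eq_mul]
      linear_combination ((c 0*a 0+c 1*a 1+c 2*a 2)*(c 0*b 0+c 1*b 1+c 2*b 2))*hccX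
    have n1 : norm3 (a - dot3 c a • c) = sy := by
      unfold norm3; rw [hsydef]; congr 1
      simp only [dot3, Pi.sub_apply, Pi.smul_apply, smul_eq_mul]
      linear_combination haaX + ((c 0*a 0+c 1*a 1+c 2*a 2)^2)*hccX
    have n2 : norm3 (b - dot3 c b • c) = sz := by
      unfold norm3; rw [hszdef]; congr 1
      simp only [dot3, Pi.sub_apply, Pi.smul_apply, smul_eq_mul]
      linear_combination hbbX + ((c 0*b 0+c 1*b 1+c 2*b 2)^2)*hccX
    unfold sphAngle; rw [d1, n1, n2]
  have keyA : det3 a b c^2 + (dot3 b c - dot3 a b*dot3 a c)^2 = (sx*sy)^2 := by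
    linear_combination hT2 - sy^2*hsx2 - (1 - dot3 a b^2)*hsy2
  have keyB : det3 a b c^2 + (dot3 a c - dot3 b c*dot3 a b)^2 = (sz*sx)^2 := by
    linear_combination hT2 - sx^2*hsz2 - (1 - dot3 b c^2)*hsx2
  have keyC : det3 a b c^2 + (dot3 a b - dot3 a c*dot3 b c)^2 = (sy*sz)^2 := by
    linear_combination hT2 - sz^2*hsy2 - (1 - dot3 a c^2)*hsz2
  obtain ⟨hcA0, hsA0, hApos0, hAlt0⟩ := arccos_facts _ _ _ (mul_pos hsx0 hsy0) hD keyA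
  obtain ⟨hcB0, hsB0, hBpos0, hBlt0⟩ := arccos_facts _ _ _ (mul_pos hsz0 hsx0) hD keyB
  obtain ⟨hcC0, hsC0, hCpos0, hCltt0⟩ := arccos_facts _ _ _ (mul_pos hsy0 hsz0) hD keyC
  set A := sphAngle a b c with hAdef
  set B := sphAngle b c a with hBdef
  set C := sphAngle c a b with hCdef
  have hcA' : Real.cos A = (dot3 b c - dot3 a b*dot3 a c)/(sx*sy) := by rw [hA]; exact hcA0
  have hsA' : Real.sin A = det3 a b c/(sx*sy) := by rw [hA]; exact hsA0
  have hApos' : 0 < A := by rw [hA]; exact hApos0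
  have hAlt' : A < Real.pi := by rw [hA]; exact hAlt0
  have hcB' : Real.cos B = (dot3 a c - dot3 b c*dot3 a b)/(sz*sx) := by rw [hB]; exact hcB0
  have hsB' : Real.sin B = det3 a b c/(sz*sx) := by rw [hB]; exact hsB0
  have hBpos' : 0 < B := by rw [hB]; exact hBpos0
  have hBlt' : B < Real.pi := by rw [hB]; exact hBlt0
  have hcC' : Real.cos C = (dot3 a b - dot3 a c*dot3 b c)/(sy*sz) := by rw [hC]; exact hcC0
  have hsC' : Real.sin C = det3 a b c/(sy*sz) := by rw [hC]; exact hsC0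
  have hCpos' : 0 < C := by rw [hC]; exact hCpos0
  have hClt' : C < Real.pi := by rw [hC]; exact hCltt0
  -- multiplied-out trig facts
  have hsxne : sx ≠ 0 := ne_of_gt hsx0
  have hsyne : sy ≠ 0 := ne_of_gt hsy0
  have hszne : sz ≠ 0 := ne_of_gt hsz0
  have hcA2 : Real.cos A * (sx*sy) = dot3 b c - dot3 a b*dot3 a c := by rw [hcA']; field_simp
  have hsA2 : Real.sin A * (sx*sy) = det3 a b c := by rw [hsA']; field_simp
  have hcB2 : Real.cos B * (sz*sx) = dot3 a c - dot3 b c*dot3 a b := by rw [hcB']; field_simp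
  have hsB2 : Real.sin B * (sz*sx) = det3 a b c := by rw [hsB']; field_simp
  have hcC2 : Real.cos C * (sy*sz) = dot3 a b - dot3 a c*dot3 b c := by rw [hcC']; field_simp
  have hsC2 : Real.sin C * (sy*sz) = det3 a b c := by rw [hsC']; field_simp
  -- S < pi
  have hABneg : Real.cos C + (Real.cos A*Real.cos B - Real.sin A*Real.sin B) < 0 := by
    have hxlt : dot3 a b < 1 := lt_one_of_sq_lt_one hx1
    have e : (Real.cos C + (Real.cos A*Real.cos B - Real.sin A*Real.sin B))*(sx^2*sy*sz)
        = -((1 - dot3 a b)*det3 a b c^2) := by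
      linear_combination (sx^2)*hcC2 + (Real.cos B*(sz*sx))*hcA2
        + (dot3 b c - dot3 a b*dot3 a c)*hcB2 - (Real.sin B*(sz*sx))*hsA2
        - (det3 a b c)*hsB2 + (dot3 a b - dot3 a c*dot3 b c)*hsx2 - (dot3 a b)*hT2
    have hpos : 0 < sx^2*sy*sz := by positivity
    have hrneg : 0 < (1 - dot3 a b)*det3 a b c^2 := mul_pos (by linarith) (pow_pos hD 2)
    by_contra hcon
    push_neg at hcon
    have hge := mul_nonneg hcon hpos.le
    rw [e] at hge
    linarith
  have hSlt : A + B - C < Real.pi := by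
    rcases le_or_gt (A+B) Real.pi with hab | hab
    · linarith
    · have h1 : Real.cos (2*Real.pi - (A+B)) < Real.cos (Real.pi - C) := by
        rw [Real.cos_two_pi_sub, Real.cos_pi_sub, Real.cos_add]; linarith
      by_contra hcon
      push_neg at hcon
      have h2 : Real.cos (Real.pi - C) ≤ Real.cos (2*Real.pi - (A+B)) :=
        Real.cos_le_cos_of_nonneg_of_le_pi (by linarith) (by linarith) (by linarith)
      linarith
  have hSgt : -Real.pi < A + B - C := by linarith
  have hcosS : -1 < Real.cos (A+B-C) := by
    have habs : |A+B-C| < Real.pi := abs_lt.2 ⟨hSgt, hSlt⟩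
    have h3 : Real.cos Real.pi < Real.cos |A+B-C| :=
      Real.cos_lt_cos_of_nonneg_of_le_pi (abs_nonneg _) (le_refl _) habs
    rw [Real.cos_pi] at h3; rw [← Real.cos_abs]; linarith
  have hhalf : Real.tan ((A+B-C)/2) = Real.sin (A+B-C)/(1+Real.cos (A+B-C)) := by
    have hc2 : 0 < Real.cos ((A+B-C)/2) := by
      apply Real.cos_pos_of_mem_Ioo
      constructor <;> [linarith; linarith]
    rw [Real.tan_eq_sin_div_cos]
    have hs : Real.sin (A+B-C) = 2*Real.sin ((A+B-C)/2)*Real.cos ((A+B-C)/2) := by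
      rw [← Real.sin_two_mul]; congr 1; ring
    have hc : 1 + Real.cos (A+B-C) = 2*Real.cos ((A+B-C)/2)^2 := by
      rw [show A+B-C = 2*((A+B-C)/2) by ring, Real.cos_two_mul]; ring
    rw [hs, hc]
    field_simp
  rw [hhalf, div_eq_div_iff (by linarith) hDne]
  rw [Real.sin_sub, Real.cos_sub, Real.sin_add, Real.cos_add]
  -- monomial facts
  have hm1 : Real.sin A*Real.cos B*Real.cos C*(sx^2*sy^2*sz^2)
      = det3 a b c*(dot3 a c - dot3 b c*dot3 a b)*(dot3 a b - dot3 a c*dot3 b c) := by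
    linear_combination (Real.cos B*(sz*sx)*(Real.cos C*(sy*sz)))*hsA2
      + (det3 a b c*(Real.cos C*(sy*sz)))*hcB2
      + (det3 a b c*(dot3 a c - dot3 b c*dot3 a b))*hcC2
  have hm2 : Real.cos A*Real.sin B*Real.cos C*(sx^2*sy^2*sz^2)
      = (dot3 b c - dot3 a b*dot3 a c)*det3 a b c*(dot3 a b - dot3 a c*dot3 b c) := by
    linear_combination (Real.sin B*(sz*sx)*(Real.cos C*(sy*sz)))*hcA2
      + ((dot3 b c - dot3 a b*dot3 a c)*(Real.cos C*(sy*sz)))*hsB2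
      + ((dot3 b c - dot3 a b*dot3 a c)*det3 a b c)*hcC2
  have hm3 : Real.cos A*Real.cos B*Real.sin C*(sx^2*sy^2*sz^2)
      = (dot3 b c - dot3 a b*dot3 a c)*(dot3 a c - dot3 b c*dot3 a b)*det3 a b c := by
    linear_combination (Real.cos B*(sz*sx)*(Real.sin C*(sy*sz)))*hcA2
      + ((dot3 b c - dot3 a b*dot3 a c)*(Real.sin C*(sy*sz)))*hcB2
      + ((dot3 b c - dot3 a b*dot3 a c)*(dot3 a c - dot3 b c*dot3 a b))*hsC2
  have hm4 : Real.sin A*Real.sin B*Real.sin C*(sx^2*sy^2*sz^2)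
      = det3 a b c*det3 a b c*det3 a b c := by
    linear_combination (Real.sin B*(sz*sx)*(Real.sin C*(sy*sz)))*hsA2
      + (det3 a b c*(Real.sin C*(sy*sz)))*hsB2
      + (det3 a b c*det3 a b c)*hsC2
  have hm5 : Real.cos A*Real.cos B*Real.cos C*(sx^2*sy^2*sz^2)
      = (dot3 b c - dot3 a b*dot3 a c)*(dot3 a c - dot3 b c*dot3 a b)*(dot3 a b - dot3 a c*dot3 b c) := by
    linear_combination (Real.cos B*(sz*sx)*(Real.cos C*(sy*sz)))*hcA2
      + ((dot3 b c - dot3 a b*dot3 a c)*(Real.cos C*(sy*sz)))*hcB2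
      + ((dot3 b c - dot3 a b*dot3 a c)*(dot3 a c - dot3 b c*dot3 a b))*hcC2
  have hm6 : Real.sin A*Real.sin B*Real.cos C*(sx^2*sy^2*sz^2)
      = det3 a b c*det3 a b c*(dot3 a b - dot3 a c*dot3 b c) := by
    linear_combination (Real.sin B*(sz*sx)*(Real.cos C*(sy*sz)))*hsA2
      + (det3 a b c*(Real.cos C*(sy*sz)))*hsB2
      + (det3 a b c*det3 a b c)*hcC2
  have hm7 : Real.sin A*Real.cos B*Real.sin C*(sx^2*sy^2*sz^2)
      = det3 a b c*(dot3 a c - dot3 b c*dot3 a b)*det3 a b c := by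
    linear_combination (Real.cos B*(sz*sx)*(Real.sin C*(sy*sz)))*hsA2
      + (det3 a b c*(Real.sin C*(sy*sz)))*hcB2
      + (det3 a b c*(dot3 a c - dot3 b c*dot3 a b))*hsC2
  have hm8 : Real.cos A*Real.sin B*Real.sin C*(sx^2*sy^2*sz^2)
      = (dot3 b c - dot3 a b*dot3 a c)*det3 a b c*det3 a b c := by
    linear_combination (Real.sin B*(sz*sx)*(Real.sin C*(sy*sz)))*hcA2
      + ((dot3 b c - dot3 a b*dot3 a c)*(Real.sin C*(sy*sz)))*hsB2
      + ((dot3 b c - dot3 a b*dot3 a c)*det3 a b c)*hsC2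
  apply mul_right_cancel₀ (show (sx^2*sy^2*sz^2 : ℝ) ≠ 0 by positivity)
  linear_combination (det3 a b c)*hm1 + (det3 a b c)*hm2 - (det3 a b c)*hm3 + (det3 a b c)*hm4
    - (1 + dot3 a b - dot3 a c - dot3 b c)*hm5
    + (1 + dot3 a b - dot3 a c - dot3 b c)*hm6
    - (1 + dot3 a b - dot3 a c - dot3 b c)*hm7
    - (1 + dot3 a b - dot3 a c - dot3 b c)*hm8
    + ((-1 + (dot3 b c) + (dot3 a c) + -1*(dot3 a b))*sy^2*sz^2)*hsx2
    + ((-1 + (dot3 b c) + (dot3 a c) + -1*(dot3 a b) + (dot3 a b)^2 + -1*(dot3 a b)^2*(dot3 b c) + -1*(dot3 a b)^2*(dot3 a c) + (dot3 a b)^3)*sz^2)*hsy2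
    + ((-1 + (dot3 b c) + (dot3 a c) + (dot3 a c)^2 + -1*(dot3 a c)^2*(dot3 b c) + -1*(dot3 a c)^3 + -1*(dot3 a b) + (dot3 a b)*(dot3 a c)^2 + (dot3 a b)^2 + -1*(dot3 a b)^2*(dot3 b c) + -1*(dot3 a b)^2*(dot3 a c) + -1*(dot3 a b)^2*(dot3 a c)^2 + (dot3 a b)^2*(dot3 a c)^2*(dot3 b c) + (dot3 a b)^2*(dot3 a c)^3 + (dot3 a b)^3 + -1*(dot3 a b)^3*(dot3 a c)^2))*hsz2
    + (1 + (det3 a b c)^2 + -1*(dot3 b c) + -1*(dot3 a c) + (dot3 a b) + -1*(dot3 a b)*(dot3 a c)*(dot3 b c) + (dot3 a b)*(dot3 a c)*(dot3 b c)^2 + (dot3 a b)*(dot3 a c)^2*(dot3 b c) + -1*(dot3 a b)^2*(dot3 a c)*(dot3 b c))*hT2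

lemma uniq3 (a b c w : Fin 3 → ℝ) (hD : det3 a b c ≠ 0) (h1 : dot3 a w = 0)
    (h2 : dot3 b w = 0) (h3 : dot3 c w = 0) : ∀ i, w i = 0 := by
  simp only [dot3] at h1 h2 h3
  have key : ∀ i, det3 a b c * w i = 0 → w i = 0 := fun i h => (mul_eq_zero.mp h).resolve_left hD
  have k0 : w 0 = 0 := by
    apply key
    simp only [det3, cross3, dot3, Matrix.cons_val_zero, Matrix.cons_val_one, Matrix.head_cons,
      Matrix.cons_val_two, Matrix.tail_cons]
    linear_combination (b 1*c 2 - b 2*c 1)*h1 + (c 1*a 2 - c 2*a 1)*h2 + (a 1*b 2 - a 2*b 1)*h3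
  have k1 : w 1 = 0 := by
    apply key
    simp only [det3, cross3, dot3, Matrix.cons_val_zero, Matrix.cons_val_one, Matrix.head_cons,
      Matrix.cons_val_two, Matrix.tail_cons]
    linear_combination (b 2*c 0 - b 0*c 2)*h1 + (c 2*a 0 - c 0*a 2)*h2 + (a 2*b 0 - a 0*b 2)*h3
  have k2 : w 2 = 0 := by
    apply key
    simp only [det3, cross3, dot3, Matrix.cons_val_zero, Matrix.cons_val_one, Matrix.head_cons,
      Matrix.cons_val_two, Matrix.tail_cons]
    linear_combination (b 0*c 1 - b 1*c 0)*h1 + (c 0*a 1 - c 1*a 0)*h2 + (a 0*b 1 - a 1*b 0)*h3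
  intro i
  fin_cases i
  · exact k0
  · exact k1
  · exact k2

set_option maxHeartbeats 1000000 in
lemma mega (a b c d N' N V' V : Fin 3 → ℝ) (f0 fb fc fd : ℝ)
    (haa : dot3 a a = 1) (hcc : dot3 c c = 1)
    (hD' : det3 a b c ≠ 0) (hD : det3 a c d ≠ 0) (h1u : 1 + dot3 a c ≠ 0)
    (hN'a : dot3 a N' = 1) (hN'b : dot3 b N' = 1) (hN'c : dot3 c N' = 1)
    (hNa : dot3 a N = 1) (hNc : dot3 c N = 1) (hNd : dot3 d N = 1)
    (hV'a : dot3 a V' = f0) (hV'b : dot3 b V' = fb) (hV'c : dot3 c V' = fc)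
    (hVa : dot3 a V = f0) (hVc : dot3 c V = fc) (hVd : dot3 d V = fd) :
    det3 a V' N + det3 a N' V
      = 2*(((1 + dot3 a c - dot3 a d - dot3 c d)/det3 a c d
            + (1 + dot3 a c - dot3 a b - dot3 b c)/det3 a b c)/(1 + dot3 a c))*(fc - dot3 a c*f0)
        + (fb*(1 - dot3 a c)/det3 a b c - fc*(1 - dot3 a d)/det3 a c d)
        + (fd*(1 - dot3 a c)/det3 a c d - fc*(1 - dot3 a b)/det3 a b c)
        + f0*((dot3 a c/det3 a b c - dot3 a d/det3 a c d)
              + (dot3 a c/det3 a c d - dot3 a b/det3 a b c)) := by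
  have hVaX := hVa; have hVcX := hVc; have hVdX := hVd
  have hV'aX := hV'a; have hV'bX := hV'b; have hV'cX := hV'c
  have hNaX := hNa; have hNcX := hNc; have hNdX := hNd
  have hN'aX := hN'a; have hN'bX := hN'b; have hN'cX := hN'c
  have haaX := haa; have hccX := hcc
  simp only [dot3] at hVaX hVcX hVdX hV'aX hV'bX hV'cX hNaX hNcX hNdX hN'aX hN'bX hN'cX haaX hccX
  -- explicit solution formulas
  have hVex : ∀ i, det3 a c d * V i = f0*cross3 c d i + fc*cross3 d a i + fd*cross3 a c i := by
    have h1 : dot3 a (fun i => det3 a c d * V i - (f0*cross3 c d i + fc*cross3 d a i + fd*cross3 a c i)) = 0 := by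
      simp only [dot3, det3, cross3, Matrix.cons_val_zero, Matrix.cons_val_one, Matrix.head_cons,
        Matrix.cons_val_two, Matrix.tail_cons]
      linear_combination (a 0*(c 1*d 2 - c 2*d 1) + a 1*(c 2*d 0 - c 0*d 2) + a 2*(c 0*d 1 - c 1*d 0))*hVaX
    have h2 : dot3 c (fun i => det3 a c d * V i - (f0*cross3 c d i + fc*cross3 d a i + fd*cross3 a c i)) = 0 := by
      simp only [dot3, det3, cross3, Matrix.cons_val_zero, Matrix.cons_val_one, Matrix.head_cons,
        Matrix.cons_val_two, Matrix.tail_cons]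
      linear_combination (a 0*(c 1*d 2 - c 2*d 1) + a 1*(c 2*d 0 - c 0*d 2) + a 2*(c 0*d 1 - c 1*d 0))*hVcX
    have h3 : dot3 d (fun i => det3 a c d * V i - (f0*cross3 c d i + fc*cross3 d a i + fd*cross3 a c i)) = 0 := by
      simp only [dot3, det3, cross3, Matrix.cons_val_zero, Matrix.cons_val_one, Matrix.head_cons,
        Matrix.cons_val_two, Matrix.tail_cons]
      linear_combination (a 0*(c 1*d 2 - c 2*d 1) + a 1*(c 2*d 0 - c 0*d 2) + a 2*(c 0*d 1 - c 1*d 0))*hVdX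
    intro i
    exact sub_eq_zero.mp (uniq3 a c d _ hD h1 h2 h3 i)
  have hNex : ∀ i, det3 a c d * N i = cross3 c d i + cross3 d a i + cross3 a c i := by
    have h1 : dot3 a (fun i => det3 a c d * N i - (cross3 c d i + cross3 d a i + cross3 a c i)) = 0 := by
      simp only [dot3, det3, cross3, Matrix.cons_val_zero, Matrix.cons_val_one, Matrix.head_cons,
        Matrix.cons_val_two, Matrix.tail_cons]
      linear_combination (a 0*(c 1*d 2 - c 2*d 1) + a 1*(c 2*d 0 - c 0*d 2) + a 2*(c 0*d 1 - c 1*d 0))*hNaX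
    have h2 : dot3 c (fun i => det3 a c d * N i - (cross3 c d i + cross3 d a i + cross3 a c i)) = 0 := by
      simp only [dot3, det3, cross3, Matrix.cons_val_zero, Matrix.cons_val_one, Matrix.head_cons,
        Matrix.cons_val_two, Matrix.tail_cons]
      linear_combination (a 0*(c 1*d 2 - c 2*d 1) + a 1*(c 2*d 0 - c 0*d 2) + a 2*(c 0*d 1 - c 1*d 0))*hNcX
    have h3 : dot3 d (fun i => det3 a c d * N i - (cross3 c d i + cross3 d a i + cross3 a c i)) = 0 := by
      simp only [dot3, det3, cross3, Matrix.cons_val_zero, Matrix.cons_val_one, Matrix.head_cons,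
        Matrix.cons_val_two, Matrix.tail_cons]
      linear_combination (a 0*(c 1*d 2 - c 2*d 1) + a 1*(c 2*d 0 - c 0*d 2) + a 2*(c 0*d 1 - c 1*d 0))*hNdX
    intro i
    exact sub_eq_zero.mp (uniq3 a c d _ hD h1 h2 h3 i)
  have hV'ex : ∀ i, det3 a b c * V' i = f0*cross3 b c i + fb*cross3 c a i + fc*cross3 a b i := by
    have h1 : dot3 a (fun i => det3 a b c * V' i - (f0*cross3 b c i + fb*cross3 c a i + fc*cross3 a b i)) = 0 := by
      simp only [dot3, det3, cross3, Matrix.cons_val_zero, Matrix.cons_val_one, Matrix.head_cons,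
        Matrix.cons_val_two, Matrix.tail_cons]
      linear_combination (a 0*(b 1*c 2 - b 2*c 1) + a 1*(b 2*c 0 - b 0*c 2) + a 2*(b 0*c 1 - b 1*c 0))*hV'aX
    have h2 : dot3 b (fun i => det3 a b c * V' i - (f0*cross3 b c i + fb*cross3 c a i + fc*cross3 a b i)) = 0 := by
      simp only [dot3, det3, cross3, Matrix.cons_val_zero, Matrix.cons_val_one, Matrix.head_cons,
        Matrix.cons_val_two, Matrix.tail_cons]
      linear_combination (a 0*(b 1*c 2 - b 2*c 1) + a 1*(b 2*c 0 - b 0*c 2) + a 2*(b 0*c 1 - b 1*c 0))*hV'bX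
    have h3 : dot3 c (fun i => det3 a b c * V' i - (f0*cross3 b c i + fb*cross3 c a i + fc*cross3 a b i)) = 0 := by
      simp only [dot3, det3, cross3, Matrix.cons_val_zero, Matrix.cons_val_one, Matrix.head_cons,
        Matrix.cons_val_two, Matrix.tail_cons]
      linear_combination (a 0*(b 1*c 2 - b 2*c 1) + a 1*(b 2*c 0 - b 0*c 2) + a 2*(b 0*c 1 - b 1*c 0))*hV'cX
    intro i
    exact sub_eq_zero.mp (uniq3 a b c _ hD' h1 h2 h3 i)
  have hN'ex : ∀ i, det3 a b c * N' i = cross3 b c i + cross3 c a i + cross3 a b i := by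
    have h1 : dot3 a (fun i => det3 a b c * N' i - (cross3 b c i + cross3 c a i + cross3 a b i)) = 0 := by
      simp only [dot3, det3, cross3, Matrix.cons_val_zero, Matrix.cons_val_one, Matrix.head_cons,
        Matrix.cons_val_two, Matrix.tail_cons]
      linear_combination (a 0*(b 1*c 2 - b 2*c 1) + a 1*(b 2*c 0 - b 0*c 2) + a 2*(b 0*c 1 - b 1*c 0))*hN'aX
    have h2 : dot3 b (fun i => det3 a b c * N' i - (cross3 b c i + cross3 c a i + cross3 a b i)) = 0 := by
      simp only [dot3, det3, cross3, Matrix.cons_val_zero, Matrix.cons_val_one, Matrix.head_cons,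
        Matrix.cons_val_two, Matrix.tail_cons]
      linear_combination (a 0*(b 1*c 2 - b 2*c 1) + a 1*(b 2*c 0 - b 0*c 2) + a 2*(b 0*c 1 - b 1*c 0))*hN'bX
    have h3 : dot3 c (fun i => det3 a b c * N' i - (cross3 b c i + cross3 c a i + cross3 a b i)) = 0 := by
      simp only [dot3, det3, cross3, Matrix.cons_val_zero, Matrix.cons_val_one, Matrix.head_cons,
        Matrix.cons_val_two, Matrix.tail_cons]
      linear_combination (a 0*(b 1*c 2 - b 2*c 1) + a 1*(b 2*c 0 - b 0*c 2) + a 2*(b 0*c 1 - b 1*c 0))*hN'cX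
    intro i
    exact sub_eq_zero.mp (uniq3 a b c _ hD' h1 h2 h3 i)
  -- F1
  have hfun1 : (fun i => det3 a b c * V' i) = (fun i => f0*cross3 b c i + fb*cross3 c a i + fc*cross3 a b i) :=
    funext hV'ex
  have hF1 : det3 a b c * det3 a V' N
      = f0*(dot3 a c*dot3 b N - dot3 a b) + fb*(1 - dot3 a c) + fc*(dot3 a b - dot3 b N) := by
    have step1 : det3 a b c * det3 a V' N = det3 a (fun i => det3 a b c * V' i) N := by
      simp only [det3, cross3, dot3, Matrix.cons_val_zero, Matrix.cons_val_one, Matrix.head_cons,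
        Matrix.cons_val_two, Matrix.tail_cons]
      ring
    rw [step1, hfun1]
    have step2 : det3 a (fun i => f0*cross3 b c i + fb*cross3 c a i + fc*cross3 a b i) N
        = f0*(dot3 a c*dot3 b N - dot3 a b*dot3 c N) + fb*(dot3 a a*dot3 c N - dot3 a c*dot3 a N)
          + fc*(dot3 a b*dot3 a N - dot3 a a*dot3 b N) := by
      simp only [det3, cross3, dot3, Matrix.cons_val_zero, Matrix.cons_val_one, Matrix.head_cons,
        Matrix.cons_val_two, Matrix.tail_cons]
      ring
    rw [step2, haa, hNa, hNc]
    ring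
  -- F2
  have hfun2 : (fun i => det3 a c d * V i) = (fun i => f0*cross3 c d i + fc*cross3 d a i + fd*cross3 a c i) :=
    funext hVex
  have hF2 : det3 a c d * det3 a N' V
      = f0*(dot3 a c*dot3 d N' - dot3 a d) + fc*(dot3 a d - dot3 d N') + fd*(1 - dot3 a c) := by
    have step1 : det3 a c d * det3 a N' V = det3 a N' (fun i => det3 a c d * V i) := by
      simp only [det3, cross3, dot3, Matrix.cons_val_zero, Matrix.cons_val_one, Matrix.head_cons,
        Matrix.cons_val_two, Matrix.tail_cons]
      ring
    rw [step1, hfun2]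
    have step2 : det3 a N' (fun i => f0*cross3 c d i + fc*cross3 d a i + fd*cross3 a c i)
        = f0*(dot3 a c*dot3 d N' - dot3 a d*dot3 c N') + fc*(dot3 a d*dot3 a N' - dot3 a a*dot3 d N')
          + fd*(dot3 a a*dot3 c N' - dot3 a c*dot3 a N') := by
      simp only [det3, cross3, dot3, Matrix.cons_val_zero, Matrix.cons_val_one, Matrix.head_cons,
        Matrix.cons_val_two, Matrix.tail_cons]
      ring
    rw [step2, haa, hN'a, hN'c]
    ring
  -- F3
  have hfunN : (fun i => det3 a c d * N i) = (fun i => cross3 c d i + cross3 d a i + cross3 a c i) :=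
    funext hNex
  have hbN : det3 a c d * dot3 b N = dot3 b (fun i => cross3 c d i + cross3 d a i + cross3 a c i) := by
    rw [← hfunN]
    simp only [dot3]
    ring
  have hF3 : (1 - dot3 b N)*((1 + dot3 a c)*det3 a c d)
      = ((1 + dot3 a c - dot3 a d - dot3 c d)*det3 a b c + (1 + dot3 a c - dot3 a b - dot3 b c)*det3 a c d) := by
    have key : (det3 a c d - dot3 b (fun i => cross3 c d i + cross3 d a i + cross3 a c i))*(1 + dot3 a c)
        = ((1 + dot3 a c - dot3 a d - dot3 c d)*det3 a b c + (1 + dot3 a c - dot3 a b - dot3 b c)*det3 a c d) := by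
      simp only [det3, cross3, dot3, Matrix.cons_val_zero, Matrix.cons_val_one, Matrix.head_cons,
        Matrix.cons_val_two, Matrix.tail_cons]
      linear_combination (b 0*(c 1*d 2 - c 2*d 1) + b 1*(c 2*d 0 - c 0*d 2) + b 2*(c 0*d 1 - c 1*d 0))*haaX
        + (a 0*(b 1*d 2 - b 2*d 1) + a 1*(b 2*d 0 - b 0*d 2) + a 2*(b 0*d 1 - b 1*d 0))*hccX
    calc (1 - dot3 b N)*((1 + dot3 a c)*det3 a c d)
        = (det3 a c d - det3 a c d*dot3 b N)*(1 + dot3 a c) := by ring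
      _ = (det3 a c d - dot3 b (fun i => cross3 c d i + cross3 d a i + cross3 a c i))*(1 + dot3 a c) := by
          rw [hbN]
      _ = _ := key
  -- F4
  have hfunN' : (fun i => det3 a b c * N' i) = (fun i => cross3 b c i + cross3 c a i + cross3 a b i) :=
    funext hN'ex
  have hdN' : det3 a b c * dot3 d N' = dot3 d (fun i => cross3 b c i + cross3 c a i + cross3 a b i) := by
    rw [← hfunN']
    simp only [dot3]
    ring
  have hF4 : (1 - dot3 d N')*((1 + dot3 a c)*det3 a b c)
      = ((1 + dot3 a c - dot3 a d - dot3 c d)*det3 a b c + (1 + dot3 a c - dot3 a b - dot3 b c)*det3 a c d) := by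
    have key : (det3 a b c - dot3 d (fun i => cross3 b c i + cross3 c a i + cross3 a b i))*(1 + dot3 a c)
        = ((1 + dot3 a c - dot3 a d - dot3 c d)*det3 a b c + (1 + dot3 a c - dot3 a b - dot3 b c)*det3 a c d) := by
      simp only [det3, cross3, dot3, Matrix.cons_val_zero, Matrix.cons_val_one, Matrix.head_cons,
        Matrix.cons_val_two, Matrix.tail_cons]
      linear_combination (b 0*(c 1*d 2 - c 2*d 1) + b 1*(c 2*d 0 - c 0*d 2) + b 2*(c 0*d 1 - c 1*d 0))*haaX
        + (a 0*(b 1*d 2 - b 2*d 1) + a 1*(b 2*d 0 - b 0*d 2) + a 2*(b 0*d 1 - b 1*d 0))*hccX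
    calc (1 - dot3 d N')*((1 + dot3 a c)*det3 a b c)
        = (det3 a b c - det3 a b c*dot3 d N')*(1 + dot3 a c) := by ring
      _ = (det3 a b c - dot3 d (fun i => cross3 b c i + cross3 c a i + cross3 a b i))*(1 + dot3 a c) := by
          rw [hdN']
      _ = _ := key
  -- assemble
  have hg : dot3 b N = 1 - ((1 + dot3 a c - dot3 a d - dot3 c d)*det3 a b c
      + (1 + dot3 a c - dot3 a b - dot3 b c)*det3 a c d)/((1 + dot3 a c)*det3 a c d) := by
    field_simp
    linear_combination -hF3
  have hh : dot3 d N' = 1 - ((1 + dot3 a c - dot3 a d - dot3 c d)*det3 a b c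
      + (1 + dot3 a c - dot3 a b - dot3 b c)*det3 a c d)/((1 + dot3 a c)*det3 a b c) := by
    field_simp
    linear_combination -hF4
  have hd1 : det3 a V' N = (f0*(dot3 a c*dot3 b N - dot3 a b) + fb*(1 - dot3 a c)
      + fc*(dot3 a b - dot3 b N))/det3 a b c := by
    rw [eq_div_iff hD']
    linear_combination hF1
  have hd2 : det3 a N' V = (f0*(dot3 a c*dot3 d N' - dot3 a d) + fc*(dot3 a d - dot3 d N')
      + fd*(1 - dot3 a c))/det3 a c d := by
    rw [eq_div_iff hD]
    linear_combination hF2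
  rw [hd1, hd2, hg, hh]
  field_simp
  ring


set_option maxHeartbeats 2000000

/-- Lemma 2.4 (vertex-star form): the derivative at `ε = 0` of the algebraic area of the
dual face, under the deformation `n_j(ε)` of the dual vertices determined by support
numbers `1 + ε·f`, equals `2·d₀·f₀ + ∑ c_j·(f_j − f₀)`.  In particular it vanishes if `f`
is a `(−2)`-eigenfunction of the discrete spherical Laplacian at the central vertex. -/
theorem sph_dual_area_derivative
    (m : ℕ) (hm : 3 ≤ m) [NeZero m]
    (p0 : Fin 3 → ℝ) (p : ZMod m → Fin 3 → ℝ)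
    (hp0 : norm3 p0 = 1) (hp : ∀ j, norm3 (p j) = 1)
    (hdet : ∀ j : ZMod m, 0 < det3 p0 (p j) (p (j+1)))
    (f0 : ℝ) (f : ZMod m → ℝ)
    (n : ZMod m → ℝ → Fin 3 → ℝ)
    (hn0 : ∀ (j : ZMod m) (ε : ℝ), dot3 p0 (n j ε) = 1 + ε * f0)
    (hn1 : ∀ (j : ZMod m) (ε : ℝ), dot3 (p j) (n j ε) = 1 + ε * f j)
    (hn2 : ∀ (j : ZMod m) (ε : ℝ), dot3 (p (j+1)) (n j ε) = 1 + ε * f (j+1)) :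
    HasDerivAt (fun ε : ℝ => (1 / 2) * ∑ j : ZMod m, det3 p0 (n (j-1) ε) (n j ε))
      (2 * sphStarVertexWeight m p0 p * f0
        + ∑ j : ZMod m, sphStarWeight m p0 p j * (f j - f0)) 0
    ∧ ((∑ j : ZMod m, sphStarWeight m p0 p j * (f j - f0)
          = -2 * sphStarVertexWeight m p0 p * f0) →
        HasDerivAt (fun ε : ℝ => (1 / 2) * ∑ j : ZMod m, det3 p0 (n (j-1) ε) (n j ε))
          0 0) := by
  have haa : dot3 p0 p0 = 1 := dot3_unit hp0
  have hpu : ∀ j, dot3 (p j) (p j) = 1 := fun j => dot3_unit (hp j)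
  have hDne : ∀ j : ZMod m, det3 p0 (p j) (p (j+1)) ≠ 0 := fun j => ne_of_gt (hdet j)
  have hdet' : ∀ j : ZMod m, 0 < det3 p0 (p (j-1)) (p j) := fun j => by
    have h := hdet (j-1); rwa [sub_add_cancel] at h
  have h1upos : ∀ j : ZMod m, 0 < 1 + dot3 p0 (p j) := fun j => by
    have h := sq_lt_one_of_det p0 (p j) (p (j+1)) haa (hpu j) (hpu (j+1)) (hDne j)
    nlinarith
  have hu1le : ∀ j : ZMod m, -1 ≤ dot3 p0 (p j) := fun j => by
    have h := lag3 p0 (p j) haa (hpu j); nlinarith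
  have hule : ∀ j : ZMod m, dot3 p0 (p j) ≤ 1 := fun j => by
    have h := lag3 p0 (p j) haa (hpu j); nlinarith
  -- affine dependence on ε
  have haff : ∀ (j : ZMod m) (ε : ℝ) (i : Fin 3), n j ε i = n j 0 i + ε * (n j 1 i - n j 0 i) := by
    intro j ε
    have h1 : dot3 p0 (fun i => n j ε i - (n j 0 i + ε*(n j 1 i - n j 0 i))) = 0 := by
      have e0 := hn0 j ε; have e1 := hn0 j 0; have e2 := hn0 j 1
      simp only [dot3] at e0 e1 e2 ⊢
      linear_combination e0 - (1-ε)*e1 - ε*e2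
    have h2 : dot3 (p j) (fun i => n j ε i - (n j 0 i + ε*(n j 1 i - n j 0 i))) = 0 := by
      have e0 := hn1 j ε; have e1 := hn1 j 0; have e2 := hn1 j 1
      simp only [dot3] at e0 e1 e2 ⊢
      linear_combination e0 - (1-ε)*e1 - ε*e2
    have h3 : dot3 (p (j+1)) (fun i => n j ε i - (n j 0 i + ε*(n j 1 i - n j 0 i))) = 0 := by
      have e0 := hn2 j ε; have e1 := hn2 j 0; have e2 := hn2 j 1
      simp only [dot3] at e0 e1 e2 ⊢
      linear_combination e0 - (1-ε)*e1 - ε*e2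
    intro i
    exact sub_eq_zero.mp (uniq3 p0 (p j) (p (j+1)) _ (hDne j) h1 h2 h3 i)
  -- quadratic expansion
  have hquad : ∀ (j : ZMod m) (ε : ℝ), det3 p0 (n (j-1) ε) (n j ε)
      = det3 p0 (n (j-1) 0) (n j 0)
        + ε*(det3 p0 (fun i => n (j-1) 1 i - n (j-1) 0 i) (n j 0)
             + det3 p0 (n (j-1) 0) (fun i => n j 1 i - n j 0 i))
        + ε^2*det3 p0 (fun i => n (j-1) 1 i - n (j-1) 0 i) (fun i => n j 1 i - n j 0 i) := by
    intro j ε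
    have ha' : n (j-1) ε = fun i => n (j-1) 0 i + ε*(n (j-1) 1 i - n (j-1) 0 i) := funext (haff (j-1) ε)
    have hb' : n j ε = fun i => n j 0 i + ε*(n j 1 i - n j 0 i) := funext (haff j ε)
    rw [ha', hb']
    simp only [det3, cross3, dot3, Matrix.cons_val_zero, Matrix.cons_val_one, Matrix.head_cons,
      Matrix.cons_val_two, Matrix.tail_cons]
    ring
  -- per-edge identity via mega
  have hmega : ∀ j : ZMod m,
      det3 p0 (fun i => n (j-1) 1 i - n (j-1) 0 i) (n j 0)
        + det3 p0 (n (j-1) 0) (fun i => n j 1 i - n j 0 i)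
      = 2*(((1 + dot3 p0 (p j) - dot3 p0 (p (j+1)) - dot3 (p j) (p (j+1)))/det3 p0 (p j) (p (j+1))
            + (1 + dot3 p0 (p j) - dot3 p0 (p (j-1)) - dot3 (p (j-1)) (p j))/det3 p0 (p (j-1)) (p j))/(1 + dot3 p0 (p j)))*(f j - dot3 p0 (p j)*f0)
        + (f (j-1)*(1 - dot3 p0 (p j))/det3 p0 (p (j-1)) (p j) - f j*(1 - dot3 p0 (p (j+1)))/det3 p0 (p j) (p (j+1)))
        + (f (j+1)*(1 - dot3 p0 (p j))/det3 p0 (p j) (p (j+1)) - f j*(1 - dot3 p0 (p (j-1)))/det3 p0 (p (j-1)) (p j))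
        + f0*((dot3 p0 (p j)/det3 p0 (p (j-1)) (p j) - dot3 p0 (p (j+1))/det3 p0 (p j) (p (j+1)))
              + (dot3 p0 (p j)/det3 p0 (p j) (p (j+1)) - dot3 p0 (p (j-1))/det3 p0 (p (j-1)) (p j))) := by
    intro j
    have hj1 : (j : ZMod m) - 1 + 1 = j := sub_add_cancel j 1
    have hN'a : dot3 p0 (n (j-1) 0) = 1 := by have h := hn0 (j-1) 0; simpa using h
    have hN'b : dot3 (p (j-1)) (n (j-1) 0) = 1 := by have h := hn1 (j-1) 0; simpa using h
    have hN'c : dot3 (p j) (n (j-1) 0) = 1 := by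
      have h := hn2 (j-1) 0; rw [hj1] at h; simpa using h
    have hNa : dot3 p0 (n j 0) = 1 := by have h := hn0 j 0; simpa using h
    have hNc : dot3 (p j) (n j 0) = 1 := by have h := hn1 j 0; simpa using h
    have hNd : dot3 (p (j+1)) (n j 0) = 1 := by have h := hn2 j 0; simpa using h
    have hV'a : dot3 p0 (fun i => n (j-1) 1 i - n (j-1) 0 i) = f0 := by
      have e1 := hn0 (j-1) 1; have e0 := hn0 (j-1) 0
      simp only [dot3] at e1 e0 ⊢
      linear_combination e1 - e0
    have hV'b : dot3 (p (j-1)) (fun i => n (j-1) 1 i - n (j-1) 0 i) = f (j-1) := by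
      have e1 := hn1 (j-1) 1; have e0 := hn1 (j-1) 0
      simp only [dot3] at e1 e0 ⊢
      linear_combination e1 - e0
    have hV'c : dot3 (p j) (fun i => n (j-1) 1 i - n (j-1) 0 i) = f j := by
      have e1 := hn2 (j-1) 1; have e0 := hn2 (j-1) 0
      rw [hj1] at e1 e0
      simp only [dot3] at e1 e0 ⊢
      linear_combination e1 - e0
    have hVa : dot3 p0 (fun i => n j 1 i - n j 0 i) = f0 := by
      have e1 := hn0 j 1; have e0 := hn0 j 0
      simp only [dot3] at e1 e0 ⊢
      linear_combination e1 - e0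
    have hVc : dot3 (p j) (fun i => n j 1 i - n j 0 i) = f j := by
      have e1 := hn1 j 1; have e0 := hn1 j 0
      simp only [dot3] at e1 e0 ⊢
      linear_combination e1 - e0
    have hVd : dot3 (p (j+1)) (fun i => n j 1 i - n j 0 i) = f (j+1) := by
      have e1 := hn2 j 1; have e0 := hn2 j 0
      simp only [dot3] at e1 e0 ⊢
      linear_combination e1 - e0
    exact mega p0 (p (j-1)) (p j) (p (j+1)) (n (j-1) 0) (n j 0)
      (fun i => n (j-1) 1 i - n (j-1) 0 i) (fun i => n j 1 i - n j 0 i)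
      f0 (f (j-1)) (f j) (f (j+1)) haa (hpu j) (ne_of_gt (hdet' j)) (hDne j)
      (ne_of_gt (h1upos j)) hN'a hN'b hN'c hNa hNc hNd hV'a hV'b hV'c hVa hVc hVd
  -- weight identification
  have hcos2 : ∀ j : ZMod m, 2*Real.cos (Real.arccos (dot3 p0 (p j))/2)^2 = 1 + dot3 p0 (p j) := by
    intro j
    have hco : Real.cos (Real.arccos (dot3 p0 (p j))) = dot3 p0 (p j) :=
      Real.cos_arccos (hu1le j) (hule j)
    have h := Real.cos_two_mul (Real.arccos (dot3 p0 (p j))/2)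
    rw [show 2*(Real.arccos (dot3 p0 (p j))/2) = Real.arccos (dot3 p0 (p j)) by ring, hco] at h
    linarith
  have hsin2 : ∀ j : ZMod m, Real.sin (Real.arccos (dot3 p0 (p j))/2)^2 = (1 - dot3 p0 (p j))/2 := by
    intro j
    have h := Real.sin_sq_add_cos_sq (Real.arccos (dot3 p0 (p j))/2)
    have h2 := hcos2 j
    linarith
  have hWeq : ∀ j : ZMod m, sphStarWeight m p0 p j
      = ((1 + dot3 p0 (p j) - dot3 p0 (p (j+1)) - dot3 (p j) (p (j+1)))/det3 p0 (p j) (p (j+1))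
         + (1 + dot3 p0 (p j) - dot3 p0 (p (j-1)) - dot3 (p (j-1)) (p j))/det3 p0 (p (j-1)) (p j))/(1 + dot3 p0 (p j)) := by
    intro j
    have t1 := star_tan p0 (p j) (p (j+1)) haa (hpu j) (hpu (j+1)) (hdet j)
    have hcyc : det3 (p j) p0 (p (j-1)) = det3 p0 (p (j-1)) (p j) := (det3_cyc p0 (p (j-1)) (p j)).symm
    have t2 := star_tan (p j) p0 (p (j-1)) (hpu j) haa (hpu (j-1)) (by rw [hcyc]; exact hdet' j)
    unfold sphStarWeight
    rw [t1]
    rw [show (sphAngle p0 (p (j-1)) (p j) + sphAngle (p j) p0 (p (j-1)) - sphAngle (p (j-1)) (p j) p0)/2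
        = (sphAngle (p j) p0 (p (j-1)) + sphAngle p0 (p (j-1)) (p j) - sphAngle (p (j-1)) (p j) p0)/2 by ring]
    rw [t2, hcos2 j, hcyc, dot3_comm (p j) p0, dot3_comm (p j) (p (j-1))]
    ring
  -- the derivative value computation
  have step1 : (∑ j : ZMod m, (det3 p0 (fun i => n (j-1) 1 i - n (j-1) 0 i) (n j 0)
        + det3 p0 (n (j-1) 0) (fun i => n j 1 i - n j 0 i)))
      = ∑ j : ZMod m, 2*(sphStarWeight m p0 p j)*(f j - dot3 p0 (p j)*f0) := by
    rw [Finset.sum_congr rfl (fun j _ => hmega j)]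
    rw [Finset.sum_add_distrib, Finset.sum_add_distrib, Finset.sum_add_distrib]
    have eG : ∑ j : ZMod m, (f (j-1)*(1 - dot3 p0 (p j))/det3 p0 (p (j-1)) (p j)
          - f j*(1 - dot3 p0 (p (j+1)))/det3 p0 (p j) (p (j+1))) = 0 := by
      rw [Finset.sum_sub_distrib]
      rw [show ∑ j : ZMod m, f j*(1 - dot3 p0 (p (j+1)))/det3 p0 (p j) (p (j+1))
          = ∑ j : ZMod m, f (j-1)*(1 - dot3 p0 (p j))/det3 p0 (p (j-1)) (p j) from
        Fintype.sum_equiv (Equiv.addRight (1 : ZMod m)) _ _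
          (fun j => by simp only [Equiv.coe_addRight, add_sub_cancel_right])]
      exact sub_self _
    have eH : ∑ j : ZMod m, (f (j+1)*(1 - dot3 p0 (p j))/det3 p0 (p j) (p (j+1))
          - f j*(1 - dot3 p0 (p (j-1)))/det3 p0 (p (j-1)) (p j)) = 0 := by
      rw [Finset.sum_sub_distrib]
      rw [show ∑ j : ZMod m, f j*(1 - dot3 p0 (p (j-1)))/det3 p0 (p (j-1)) (p j)
          = ∑ j : ZMod m, f (j+1)*(1 - dot3 p0 (p j))/det3 p0 (p j) (p (j+1)) from
        Fintype.sum_equiv (Equiv.subRight (1 : ZMod m)) _ _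
          (fun j => by simp only [Equiv.subRight_apply, sub_add_cancel])]
      exact sub_self _
    have eF : ∑ j : ZMod m, f0*((dot3 p0 (p j)/det3 p0 (p (j-1)) (p j)
            - dot3 p0 (p (j+1))/det3 p0 (p j) (p (j+1)))
          + (dot3 p0 (p j)/det3 p0 (p j) (p (j+1)) - dot3 p0 (p (j-1))/det3 p0 (p (j-1)) (p j))) = 0 := by
      rw [← Finset.mul_sum]
      have inner : ∑ j : ZMod m, ((dot3 p0 (p j)/det3 p0 (p (j-1)) (p j)
            - dot3 p0 (p (j+1))/det3 p0 (p j) (p (j+1)))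
          + (dot3 p0 (p j)/det3 p0 (p j) (p (j+1)) - dot3 p0 (p (j-1))/det3 p0 (p (j-1)) (p j))) = 0 := by
        rw [Finset.sum_add_distrib, Finset.sum_sub_distrib, Finset.sum_sub_distrib]
        rw [show ∑ j : ZMod m, dot3 p0 (p (j+1))/det3 p0 (p j) (p (j+1))
            = ∑ j : ZMod m, dot3 p0 (p j)/det3 p0 (p (j-1)) (p j) from
          Fintype.sum_equiv (Equiv.addRight (1 : ZMod m)) _ _
            (fun j => by simp only [Equiv.coe_addRight, add_sub_cancel_right])]
        rw [show ∑ j : ZMod m, dot3 p0 (p (j-1))/det3 p0 (p (j-1)) (p j)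
            = ∑ j : ZMod m, dot3 p0 (p j)/det3 p0 (p j) (p (j+1)) from
          Fintype.sum_equiv (Equiv.subRight (1 : ZMod m)) _ _
            (fun j => by simp only [Equiv.subRight_apply, sub_add_cancel])]
        ring
      rw [inner, mul_zero]
    rw [eG, eH, eF]
    rw [Finset.sum_congr rfl (fun j _ => by rw [← hWeq j])]
    ring
  have hval : (1/2)*(∑ j : ZMod m, (det3 p0 (fun i => n (j-1) 1 i - n (j-1) 0 i) (n j 0)
        + det3 p0 (n (j-1) 0) (fun i => n j 1 i - n j 0 i)))
      = 2 * sphStarVertexWeight m p0 p * f0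
        + ∑ j : ZMod m, sphStarWeight m p0 p j * (f j - f0) := by
    rw [step1]
    unfold sphStarVertexWeight
    rw [Finset.mul_sum, Finset.mul_sum, Finset.sum_mul, ← Finset.sum_add_distrib]
    apply Finset.sum_congr rfl
    intro j _
    rw [hsin2 j]
    ring
  -- derivative of the quadratic polynomial
  have hfun : (fun ε : ℝ => (1 / 2) * ∑ j : ZMod m, det3 p0 (n (j-1) ε) (n j ε))
      = (fun ε : ℝ => (1/2)*(∑ j : ZMod m, det3 p0 (n (j-1) 0) (n j 0))
          + ((1/2)*(∑ j : ZMod m, (det3 p0 (fun i => n (j-1) 1 i - n (j-1) 0 i) (n j 0)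
              + det3 p0 (n (j-1) 0) (fun i => n j 1 i - n j 0 i))))*ε
          + ((1/2)*(∑ j : ZMod m, det3 p0 (fun i => n (j-1) 1 i - n (j-1) 0 i)
              (fun i => n j 1 i - n j 0 i)))*ε^2) := by
    funext ε
    rw [Finset.sum_congr rfl (fun j _ => hquad j ε)]
    rw [Finset.sum_add_distrib, Finset.sum_add_distrib, ← Finset.mul_sum, ← Finset.mul_sum]
    ring
  have hpoly : HasDerivAt (fun ε : ℝ => (1/2)*(∑ j : ZMod m, det3 p0 (n (j-1) 0) (n j 0))
          + ((1/2)*(∑ j : ZMod m, (det3 p0 (fun i => n (j-1) 1 i - n (j-1) 0 i) (n j 0)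
              + det3 p0 (n (j-1) 0) (fun i => n j 1 i - n j 0 i))))*ε
          + ((1/2)*(∑ j : ZMod m, det3 p0 (fun i => n (j-1) 1 i - n (j-1) 0 i)
              (fun i => n j 1 i - n j 0 i)))*ε^2)
      ((1/2)*(∑ j : ZMod m, (det3 p0 (fun i => n (j-1) 1 i - n (j-1) 0 i) (n j 0)
              + det3 p0 (n (j-1) 0) (fun i => n j 1 i - n j 0 i)))) 0 := by
    have h := (((hasDerivAt_id (0:ℝ)).const_mul
        ((1/2)*(∑ j : ZMod m, (det3 p0 (fun i => n (j-1) 1 i - n (j-1) 0 i) (n j 0)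
              + det3 p0 (n (j-1) 0) (fun i => n j 1 i - n j 0 i))))).const_add
        ((1/2)*(∑ j : ZMod m, det3 p0 (n (j-1) 0) (n j 0)))).add
        ((hasDerivAt_pow 2 (0:ℝ)).const_mul
        ((1/2)*(∑ j : ZMod m, det3 p0 (fun i => n (j-1) 1 i - n (j-1) 0 i)
              (fun i => n j 1 i - n j 0 i))))
    exact h.congr_deriv (by norm_num)
  have main : HasDerivAt (fun ε : ℝ => (1 / 2) * ∑ j : ZMod m, det3 p0 (n (j-1) ε) (n j ε))
      (2 * sphStarVertexWeight m p0 p * f0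
        + ∑ j : ZMod m, sphStarWeight m p0 p j * (f j - f0)) 0 := by
    rw [hfun, ← hval]
    exact hpoly
  refine ⟨main, fun hyp => ?_⟩
  have : 2 * sphStarVertexWeight m p0 p * f0
      + ∑ j : ZMod m, sphStarWeight m p0 p j * (f j - f0) = 0 := by
    rw [hyp]; ring
  exact this ▸ main
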